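/- Let p,q ∈ ℝ and τ ∈ ℂ with Im τ > 0, and let H be the Hermitian form on ℂ² defined by H(x,y) = x₁·conj(y₁)/Im τ for x=(x₁,x₂), y=(y₁,y₂) ∈ ℂ². Then: (i) for all λ, μ ∈ Λ₀ the imaginary part Im H(λ,μ) is an integer; and (ii) for every nonzero x ∈ ℂ, H((x,0),(x,0)) is a positive real number (equal to |x|²/Im τ). (These are the two defining conditions for H to be an ample Riemann form for the lattice Λ₀, so that ℂ²/Λ₀ is a quasi-abelian variety.) -/

import Mathlib

open Complex

/-- The lattice `Λ₀`: the additive subgroup of `ℂ²` generated by `(0,1)`, `(1,p)`, `(τ,q)`. -/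
noncomputable def Lambda0 (p q : ℝ) (τ : ℂ) : AddSubgroup (ℂ × ℂ) :=
  AddSubgroup.closure {((0 : ℂ), (1 : ℂ)), ((1 : ℂ), (p : ℂ)), (τ, (q : ℂ))}

/-- The Hermitian form `H(x,y) = x₁·conj(y₁)/Im τ` on `ℂ²`. -/
noncomputable def hermForm (τ : ℂ) (x y : ℂ × ℂ) : ℂ :=
  x.1 * (starRingEnd ℂ) y.1 / (τ.im : ℂ)

lemma Lambda0_fst (p q : ℝ) (τ : ℂ) {l : ℂ × ℂ} (hl : l ∈ Lambda0 p q τ) :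
    ∃ a b : ℤ, l.1 = (a : ℂ) + (b : ℂ) * τ := by
  induction hl using AddSubgroup.closure_induction with
  | mem x hx =>
    rcases hx with h | h | h
    · exact ⟨0, 0, by simp [h]⟩
    · exact ⟨1, 0, by simp [h]⟩
    · simp only [Set.mem_singleton_iff] at h
      exact ⟨0, 1, by simp [h]⟩
  | zero => exact ⟨0, 0, by simp⟩
  | add x y hx hy ihx ihy =>
    obtain ⟨a, b, h1⟩ := ihx
    obtain ⟨c, d, h2⟩ := ihy
    exact ⟨a + c, b + d, by push_cast; simp [Prod.fst_add, h1, h2]; ring⟩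
  | neg x hx ih =>
    obtain ⟨a, b, h⟩ := ih
    exact ⟨-a, -b, by push_cast; simp [Prod.fst_neg, h]; ring⟩

theorem hermForm_ample_riemann (p q : ℝ) (τ : ℂ) (hτ : 0 < τ.im) :
    (∀ l ∈ Lambda0 p q τ, ∀ m ∈ Lambda0 p q τ, ∃ k : ℤ, (hermForm τ l m).im = (k : ℝ)) ∧
    (∀ x : ℂ, x ≠ 0 →
      hermForm τ (x, 0) (x, 0) = ((‖x‖ ^ 2 / τ.im : ℝ) : ℂ) ∧
      0 < ‖x‖ ^ 2 / τ.im) := by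
  have hne : τ.im ≠ 0 := ne_of_gt hτ
  constructor
  · intro l hl m hm
    obtain ⟨a, b, h1⟩ := Lambda0_fst p q τ hl
    obtain ⟨c, d, h2⟩ := Lambda0_fst p q τ hm
    refine ⟨b * c - a * d, ?_⟩
    rw [hermForm, h1, h2]
    rw [div_eq_mul_inv, ← Complex.ofReal_inv]
    rw [Complex.mul_im]
    simp only [Complex.ofReal_re, Complex.ofReal_im, mul_zero, add_zero]
    rw [map_add, map_mul]
    simp only [Complex.add_im, Complex.add_re, Complex.mul_im, Complex.mul_re,
      Complex.intCast_re, Complex.intCast_im, Complex.conj_re, Complex.conj_im]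
    push_cast
    field_simp
    ring
  · intro x hx
    constructor
    · rw [hermForm]
      simp only
      rw [Complex.mul_conj, Complex.ofReal_div]
      rw [Complex.sq_norm]
    · have := norm_pos_iff.mpr hx
      positivity
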